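/- Let A be a finite-dimensional algebra over the finite field F_q, and let a, b ∈ A^× be units that are conjugate by a unit of A ⊗_{F_q} \bar{F}_q. Then a and b are conjugate by a unit of A itself. -/

import Mathlib

open Function

section Counting
universe u
variable {R : Type*} [Ring R]

noncomputable def injCard (R : Type*) [Ring R] (M N : Type*) [AddCommGroup M] [Module R M]
    [AddCommGroup N] [Module R N] : ℕ :=
  Nat.card {f : M →ₗ[R] N // Function.Injective f}

lemma injCard_congr {M M' N : Type*} [AddCommGroup M] [Module R M]
    [AddCommGroup M'] [Module R M'] [AddCommGroup N] [Module R N]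
    (e : M ≃ₗ[R] M') : injCard R M N = injCard R M' N := by
  apply Nat.card_congr
  refine ⟨fun f => ⟨f.1.comp (e.symm : M' →ₗ[R] M), f.2.comp e.symm.injective⟩,
    fun f => ⟨f.1.comp (e : M →ₗ[R] M'), f.2.comp e.injective⟩, ?_, ?_⟩ <;>
  · intro f; ext x; simp

noncomputable def fiber_equiv (M N : Type*) [AddCommGroup M] [Module R M]
    [AddCommGroup N] [Module R N] (p : Submodule R M) :
    {f : M →ₗ[R] N // LinearMap.ker f = p} ≃ {g : M ⧸ p →ₗ[R] N // Injective g} where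
  toFun f := ⟨p.liftQ f.1 f.2.ge, by
    rw [← LinearMap.ker_eq_bot, Submodule.ker_liftQ_eq_bot]; exact f.2.le⟩
  invFun g := ⟨g.1.comp p.mkQ, by
    rw [LinearMap.ker_comp, LinearMap.ker_eq_bot.2 g.2, Submodule.comap_bot,
      Submodule.ker_mkQ]⟩
  left_inv f := by ext x; simp
  right_inv g := by
    refine Subtype.ext (Submodule.linearMap_qext _ ?_)
    rw [Submodule.liftQ_mkQ]

instance fin_subm (M : Type*) [AddCommGroup M] [Module R M] [Finite M] :
    Finite (Submodule R M) :=
  Finite.of_injective (fun p => (p : Set M)) SetLike.coe_injective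

instance fin_hom (M N : Type*) [AddCommGroup M] [Module R M]
    [AddCommGroup N] [Module R N] [Finite M] [Finite N] : Finite (M →ₗ[R] N) :=
  Finite.of_injective (fun f : M →ₗ[R] N => (f : M → N)) DFunLike.coe_injective

lemma card_hom_eq_sum' (M N : Type*) [AddCommGroup M] [Module R M]
    [AddCommGroup N] [Module R N] [Finite M] [Finite N] [Fintype (Submodule R M)] :
    Nat.card (M →ₗ[R] N) = ∑ p : Submodule R M, injCard R (M ⧸ p) N := by
  rw [← Nat.card_congr (Equiv.sigmaFiberEquiv (fun f : M →ₗ[R] N => LinearMap.ker f))]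
  letI : ∀ p : Submodule R M, Fintype {g : M ⧸ p →ₗ[R] N // Injective g} := fun p => by
    have : Finite (M ⧸ p) := Quotient.finite _
    exact Fintype.ofFinite _
  letI : ∀ p : Submodule R M, Fintype {f : M →ₗ[R] N // LinearMap.ker f = p} := fun p =>
    Fintype.ofFinite _
  rw [Nat.card_eq_fintype_card, Fintype.card_sigma]
  refine Finset.sum_congr rfl fun p _ => ?_
  rw [Fintype.card_congr (fiber_equiv M N p)]
  unfold injCard
  rw [Nat.card_eq_fintype_card]

lemma quot_card_lt (M : Type*) [AddCommGroup M] [Module R M] [Finite M]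
    {p : Submodule R M} (hp : p ≠ ⊥) : Nat.card (M ⧸ p) < Nat.card M := by
  have : Finite (M ⧸ p) := Quotient.finite _
  have hle : Nat.card (M ⧸ p) ≤ Nat.card M :=
    Nat.card_le_card_of_surjective _ (Submodule.mkQ_surjective p)
  rcases hle.lt_or_eq with h | h
  · exact h
  · exfalso
    apply hp
    have hb : Function.Bijective p.mkQ := by
      rw [Nat.bijective_iff_surjective_and_card]
      exact ⟨Submodule.mkQ_surjective p, h.symm⟩
    rw [← Submodule.ker_mkQ p, LinearMap.ker_eq_bot.2 hb.injective]

lemma injCard_eq_of_card_hom_eq {M N : Type u} [AddCommGroup M] [Module R M]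
    [AddCommGroup N] [Module R N] [Finite M] [Finite N]
    (hhom : ∀ (X : Type u) [AddCommGroup X] [Module R X] [Finite X],
      Nat.card (X →ₗ[R] M) = Nat.card (X →ₗ[R] N)) :
    ∀ (X : Type u) [AddCommGroup X] [Module R X] [Finite X],
      injCard R X M = injCard R X N := by
  have key : ∀ (k : ℕ) (X : Type u) [AddCommGroup X] [Module R X] [Finite X],
      Nat.card X ≤ k → injCard R X M = injCard R X N := by
    intro k
    induction k with
    | zero => intro X _ _ _ hX; have := Nat.card_pos (α := X); omega
    | succ k ih =>
      intro X _ _ _ hX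
      letI : Fintype (Submodule R X) := Fintype.ofFinite _
      classical
      have hM := card_hom_eq_sum' (R := R) X M
      have hN := card_hom_eq_sum' (R := R) X N
      have hbot : (⊥ : Submodule R X) ∈ (Finset.univ : Finset (Submodule R X)) :=
        Finset.mem_univ _
      rw [← Finset.add_sum_erase _ _ hbot] at hM hN
      have hbotM : injCard R (X ⧸ (⊥ : Submodule R X)) M = injCard R X M :=
        injCard_congr (Submodule.quotEquivOfEqBot ⊥ rfl)
      have hbotN : injCard R (X ⧸ (⊥ : Submodule R X)) N = injCard R X N :=
        injCard_congr (Submodule.quotEquivOfEqBot ⊥ rfl)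
      have hrest : ∀ p ∈ (Finset.univ : Finset (Submodule R X)).erase ⊥,
          injCard R (X ⧸ p) M = injCard R (X ⧸ p) N := by
        intro p hp
        have hpne : p ≠ ⊥ := Finset.ne_of_mem_erase hp
        have : Finite (X ⧸ p) := Quotient.finite _
        have hlt := quot_card_lt X hpne
        exact ih (X ⧸ p) (by omega)
      rw [Finset.sum_congr rfl hrest] at hM
      rw [hbotM] at hM; rw [hbotN] at hN
      have := hhom X
      omega
  intro X _ _ _
  exact key (Nat.card X) X le_rfl

end Counting

section Cancel
universe v
variable {R : Type*} [Ring R]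

def homPiEquiv (X Z : Type*) [AddCommGroup X] [Module R X] [AddCommGroup Z] [Module R Z]
    (ι : Type*) : (X →ₗ[R] (ι → Z)) ≃ (ι → (X →ₗ[R] Z)) where
  toFun f i := (LinearMap.proj i).comp f
  invFun g := LinearMap.pi g
  left_inv f := by ext x i; simp
  right_inv g := by ext i x; simp

lemma pow_cancel_hom {M N : Type*} [AddCommGroup M] [Module R M]
    [AddCommGroup N] [Module R N] {ι : Type*} [Finite ι] [Nonempty ι]
    (e : (ι → M) ≃ₗ[R] (ι → N))
    (X : Type*) [AddCommGroup X] [Module R X] [Finite X] [Finite M] [Finite N] :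
    Nat.card (X →ₗ[R] M) = Nat.card (X →ₗ[R] N) := by
  have h1 : Nat.card (X →ₗ[R] (ι → M)) = Nat.card (X →ₗ[R] (ι → N)) := by
    apply Nat.card_congr
    exact ⟨fun f => e.toLinearMap.comp f, fun f => e.symm.toLinearMap.comp f,
      fun f => by ext x; simp, fun f => by ext x; simp⟩
  rw [Nat.card_congr (homPiEquiv X M ι), Nat.card_congr (homPiEquiv X N ι),
    Nat.card_fun, Nat.card_fun] at h1
  exact Nat.pow_left_injective (Nat.card_pos (α := ι)).ne' h1

lemma pow_cancel {M N : Type v} [AddCommGroup M] [Module R M]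
    [AddCommGroup N] [Module R N] [Finite M] [Finite N] {ι : Type*} [Finite ι] [Nonempty ι]
    (e : (ι → M) ≃ₗ[R] (ι → N)) : Nonempty (M ≃ₗ[R] N) := by
  have hinjMN := injCard_eq_of_card_hom_eq (M := M) (N := N) (fun X _ _ _ => pow_cancel_hom e X)
  have hinjNM := injCard_eq_of_card_hom_eq (M := N) (N := M) (fun X _ _ _ => pow_cancel_hom e.symm X)
  have finMM : Finite {f : M →ₗ[R] M // Injective f} := Subtype.finite
  have finNN : Finite {f : N →ₗ[R] N // Injective f} := Subtype.finite
  have h1 : 0 < injCard R M M :=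
    Nat.card_pos_iff.2 ⟨⟨⟨LinearMap.id, fun x y h => h⟩⟩, Subtype.finite⟩
  have h2 : 0 < injCard R M N := by rw [← hinjMN M]; exact h1
  have h3 : 0 < injCard R N M := by
    rw [← hinjNM N]
    exact Nat.card_pos_iff.2 ⟨⟨⟨LinearMap.id, fun x y h => h⟩⟩, Subtype.finite⟩
  obtain ⟨⟨f, hf⟩⟩ := (Nat.card_pos_iff.1 h2).1
  obtain ⟨⟨g, hg⟩⟩ := (Nat.card_pos_iff.1 h3).1
  have hcard : Nat.card M = Nat.card N :=
    le_antisymm (Nat.card_le_card_of_injective f hf) (Nat.card_le_card_of_injective g hg)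
  have hbij : Bijective f := (Nat.bijective_iff_injective_and_card f).2 ⟨hf, hcard⟩
  exact ⟨LinearEquiv.ofBijective f hbij⟩

end Cancel
open Polynomial TensorProduct

section MDCore
variable {A B : Type*} [Ring A] [Ring B]

/-- left multiplication as a ring hom into `ℤ`-linear endomorphisms -/
def lmulZ (B : Type*) [Ring B] : B →+* Module.End ℤ B where
  toFun c := LinearMap.mulLeft ℤ c
  map_one' := by ext x; simp
  map_mul' c d := by ext x; simp [mul_assoc]
  map_zero' := by ext x; simp
  map_add' c d := by ext x; simp [add_mul]

noncomputable def mdHom (ι : A →+* B) (t : B) : Polynomial A →+* Module.End ℤ B :=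
  Polynomial.eval₂RingHom' ((lmulZ B).comp ι) (LinearMap.mulRight ℤ t)
    (fun c => by ext x; simp [lmulZ, mul_assoc])

/-- Type synonym of `B`, seen as a module over `A[X]` where `A` acts through `ι` by left
multiplication and `X` acts by right multiplication by `t`. -/
@[nolint unusedArguments]
def MD (ι : A →+* B) (t : B) : Type _ := B

instance MD.addCommGroup (ι : A →+* B) (t : B) : AddCommGroup (MD ι t) :=
  inferInstanceAs (AddCommGroup B)

noncomputable instance MD.module (ι : A →+* B) (t : B) : Module (Polynomial A) (MD ι t) :=
  Module.compHom B (mdHom ι t)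

def MD.mk (ι : A →+* B) (t : B) : B → MD ι t := fun x => x

def MD.unmk (ι : A →+* B) (t : B) : MD ι t → B := fun x => x

@[simp] lemma MD.unmk_mk (ι : A →+* B) (t : B) (x : B) : MD.unmk ι t (MD.mk ι t x) = x := rfl
@[simp] lemma MD.mk_unmk (ι : A →+* B) (t : B) (x : MD ι t) : MD.mk ι t (MD.unmk ι t x) = x := rfl
lemma MD.mk_add (ι : A →+* B) (t : B) (x y : B) :
    MD.mk ι t (x + y) = MD.mk ι t x + MD.mk ι t y := rfl
lemma MD.unmk_add (ι : A →+* B) (t : B) (x y : MD ι t) :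
    MD.unmk ι t (x + y) = MD.unmk ι t x + MD.unmk ι t y := rfl

lemma MD.smul_def (ι : A →+* B) (t : B) (p : Polynomial A) (x : MD ι t) :
    p • x = MD.mk ι t
      ((Polynomial.eval₂ ((lmulZ B).comp ι) (LinearMap.mulRight ℤ t) p : Module.End ℤ B)
        (MD.unmk ι t x)) := rfl

lemma MD.C_smul (ι : A →+* B) (t : B) (c : A) (x : MD ι t) :
    (C c : Polynomial A) • x = MD.mk ι t (ι c * MD.unmk ι t x) := by
  rw [MD.smul_def, Polynomial.eval₂_C]; rfl

lemma MD.X_smul (ι : A →+* B) (t : B) (x : MD ι t) :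
    (X : Polynomial A) • x = MD.mk ι t (MD.unmk ι t x * t) := by
  rw [MD.smul_def, Polynomial.eval₂_X]; rfl

instance MD.finite (ι : A →+* B) (t : B) [Finite B] : Finite (MD ι t) :=
  inferInstanceAs (Finite B)

/-- additive maps commuting with the `C`- and `X`-actions are `A[X]`-linear. -/
lemma MD.linear_of_CX {M' C' : Type*} [AddCommGroup M'] [Module (Polynomial A) M']
    [AddCommGroup C'] [Module (Polynomial A) C'] (φ : M' →+ C')
    (h1 : ∀ (c : A) (x : M'), φ ((C c : Polynomial A) • x) = (C c : Polynomial A) • φ x)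
    (h2 : ∀ x : M', φ ((X : Polynomial A) • x) = (X : Polynomial A) • φ x)
    (p : Polynomial A) (x : M') : φ (p • x) = p • φ x := by
  induction p using Polynomial.induction_on generalizing x with
  | C c => exact h1 c x
  | add p q hp hq => rw [add_smul, add_smul, map_add, hp, hq]
  | monomial n c hp =>
      have hh : (C c * X ^ (n + 1) : Polynomial A) = (C c * X ^ n) * X := by
        rw [pow_succ, mul_assoc]
      rw [hh]
      calc φ ((C c * X ^ n * X) • x) = φ ((C c * X ^ n) • ((X : Polynomial A) • x)) := by
              rw [mul_smul]
        _ = (C c * X ^ n) • φ ((X : Polynomial A) • x) := hp _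
        _ = (C c * X ^ n) • ((X : Polynomial A) • φ x) := by rw [h2]
        _ = (C c * X ^ n * X) • φ x := (mul_smul _ _ _).symm

end MDCore

section UnitEquiv
open Polynomial
variable {A B : Type*} [Ring A] [Ring B]

noncomputable def unitEquiv (ι : A →+* B) (s t : B) (u : Bˣ) (h : s * (u : B) = (u : B) * t) :
    MD ι s ≃ₗ[Polynomial A] MD ι t := by
  have h' : t * ((u⁻¹ : Bˣ) : B) = ((u⁻¹ : Bˣ) : B) * s := by
    calc t * ((u⁻¹ : Bˣ) : B) = ((u⁻¹ : Bˣ) : B) * ((u : B) * t) * ((u⁻¹ : Bˣ) : B) := by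
          rw [← mul_assoc, Units.inv_mul, one_mul]
      _ = ((u⁻¹ : Bˣ) : B) * (s * (u : B)) * ((u⁻¹ : Bˣ) : B) := by rw [h]
      _ = ((u⁻¹ : Bˣ) : B) * s := by
          rw [mul_assoc (((u⁻¹ : Bˣ) : B)) (s * (u : B)) (((u⁻¹ : Bˣ) : B)),
            mul_assoc s ((u : B)) (((u⁻¹ : Bˣ) : B)), Units.mul_inv, mul_one]
  refine LinearEquiv.ofLinear
    { toFun := fun x => MD.mk ι t (MD.unmk ι s x * (u : B))
      map_add' := fun x y => by simp [MD.mk, MD.unmk, add_mul]; exact add_mul (R := B) _ _ _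
      map_smul' := ?_ }
    { toFun := fun x => MD.mk ι s (MD.unmk ι t x * ((u⁻¹ : Bˣ) : B))
      map_add' := fun x y => by simp [MD.mk, MD.unmk, add_mul]; exact add_mul (R := B) _ _ _
      map_smul' := ?_ } ?_ ?_
  · intro p x
    refine MD.linear_of_CX (AddMonoidHom.mk'
      (fun x : MD ι s => MD.mk ι t (MD.unmk ι s x * (u : B))) (fun x y => by
        simp [MD.mk, MD.unmk, add_mul, MD.unmk_add, MD.mk_add]; exact add_mul (R := B) _ _ _)) ?_ ?_ p x
    · intro c x
      simp only [MD.C_smul, MD.unmk_mk]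
      simp [MD.mk, MD.unmk, mul_assoc]
      exact mul_assoc (G := B) _ _ _
    · intro x
      simp only [MD.X_smul, MD.unmk_mk]
      simp only [MD.mk, MD.unmk, AddMonoidHom.mk'_apply]
      show (MD.unmk ι s x * s) * (u : B) = (MD.unmk ι s x * (u : B)) * t
      rw [mul_assoc, mul_assoc, h]
  · intro p x
    refine MD.linear_of_CX (AddMonoidHom.mk'
      (fun x : MD ι t => MD.mk ι s (MD.unmk ι t x * ((u⁻¹ : Bˣ) : B))) (fun x y => by
        simp [MD.mk, MD.unmk, add_mul, MD.unmk_add, MD.mk_add]; exact add_mul (R := B) _ _ _)) ?_ ?_ p x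
    · intro c x
      simp only [MD.C_smul, MD.unmk_mk]
      simp [MD.mk, MD.unmk, mul_assoc]
      exact mul_assoc (G := B) _ _ _
    · intro x
      simp only [MD.X_smul, MD.unmk_mk]
      simp only [MD.mk, MD.unmk, AddMonoidHom.mk'_apply]
      show (MD.unmk ι t x * t) * ((u⁻¹ : Bˣ) : B) = (MD.unmk ι t x * ((u⁻¹ : Bˣ) : B)) * s
      rw [mul_assoc, mul_assoc, h']
  · ext x
    simp only [LinearMap.coe_comp, LinearMap.coe_mk, AddHom.coe_mk, Function.comp_apply,
      LinearMap.id_coe, id_eq, MD.unmk_mk]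
    simp only [MD.mk, MD.unmk]
    show MD.unmk ι t x * ((u⁻¹ : Bˣ) : B) * (u : B) = MD.unmk ι t x
    rw [mul_assoc, Units.inv_mul, mul_one]
  · ext x
    simp only [LinearMap.coe_comp, LinearMap.coe_mk, AddHom.coe_mk, Function.comp_apply,
      LinearMap.id_coe, id_eq, MD.unmk_mk]
    simp only [MD.mk, MD.unmk]
    show MD.unmk ι s x * (u : B) * ((u⁻¹ : Bˣ) : B) = MD.unmk ι s x
    rw [mul_assoc, Units.mul_inv, mul_one]

end UnitEquiv

section Extract
open Polynomial
variable {A : Type*} [Ring A]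

lemma exists_unit_of_equiv (a b : A)
    (e : MD (RingHom.id A) a ≃ₗ[Polynomial A] MD (RingHom.id A) b) :
    ∃ v : Aˣ, a = (v : A) * b * ((v⁻¹ : Aˣ) : A) := by
  set ψ : A → A := fun x => MD.unmk _ b (e (MD.mk (RingHom.id A) a x)) with hψ
  set φ : A → A := fun y => MD.unmk _ a (e.symm (MD.mk (RingHom.id A) b y)) with hφ
  have hψmul : ∀ c x : A, ψ (c * x) = c * ψ x := by
    intro c x
    have := e.map_smul (C c : Polynomial A) (MD.mk (RingHom.id A) a x)
    rw [MD.C_smul, MD.C_smul] at this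
    exact this
  have hψa : ∀ x : A, ψ (x * a) = ψ x * b := by
    intro x
    have := e.map_smul (X : Polynomial A) (MD.mk (RingHom.id A) a x)
    rw [MD.X_smul, MD.X_smul] at this
    exact this
  have hφmul : ∀ c y : A, φ (c * y) = c * φ y := by
    intro c y
    have := e.symm.map_smul (C c : Polynomial A) (MD.mk (RingHom.id A) b y)
    rw [MD.C_smul, MD.C_smul] at this
    exact this
  set u : A := ψ 1 with hu
  set w : A := φ 1 with hw
  have hψx : ∀ x : A, ψ x = x * u := fun x => by
    have := hψmul x 1
    rw [mul_one] at this
    rw [this]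
  have hφy : ∀ y : A, φ y = y * w := fun y => by
    have := hφmul y 1
    rw [mul_one] at this
    rw [this]
  have hφψ : ∀ x : A, φ (ψ x) = x := by
    intro x
    simp [hψ, hφ, MD.mk, MD.unmk]
    exact e.symm_apply_apply x
  have hψφ : ∀ y : A, ψ (φ y) = y := by
    intro y
    simp [hψ, hφ, MD.mk, MD.unmk]
    exact e.apply_symm_apply y
  have huw : u * w = 1 := by
    have := hφψ 1
    rwa [hψx, one_mul, hφy] at this
  have hwu : w * u = 1 := by
    have := hψφ 1
    rwa [hφy, one_mul, hψx] at this
  have hab : a * u = u * b := by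
    have := hψa 1
    rwa [hψx, hψx, one_mul, one_mul] at this
  refine ⟨⟨u, w, huw, hwu⟩, ?_⟩
  show a = u * b * w
  calc a = a * (u * w) := by rw [huw, mul_one]
    _ = (a * u) * w := by rw [mul_assoc]
    _ = u * b * w := by rw [hab]

end Extract

noncomputable section PiEq
open TensorProduct
variable {F : Type*} [Field F] {K A : Type*} [Field K] [Algebra F K]
  [Ring A] [Algebra F A] {n : ℕ}

lemma tensor_decomp (bK : Module.Basis (Fin n) F K) (y : K ⊗[F] A) :
    (∑ i, bK i ⊗ₜ[F] TensorProduct.lid F A ((LinearMap.rTensor A (bK.coord i)) y)) = y := by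
  induction y using TensorProduct.induction_on with
  | zero => simp
  | tmul k y =>
      have h1 : ∀ i, (TensorProduct.lid F A) ((LinearMap.rTensor A (bK.coord i)) (k ⊗ₜ[F] y))
          = bK.repr k i • y := by
        intro i
        rw [LinearMap.rTensor_tmul, TensorProduct.lid_tmul, Module.Basis.coord_apply]
      rw [Finset.sum_congr rfl fun i _ => by rw [h1 i]]
      calc (∑ i, bK i ⊗ₜ[F] (bK.repr k i • y)) = ∑ i, (bK.repr k i • bK i) ⊗ₜ[F] y := by
            refine Finset.sum_congr rfl fun i _ => ?_
            rw [TensorProduct.tmul_smul, TensorProduct.smul_tmul']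
        _ = (∑ i, bK.repr k i • bK i) ⊗ₜ[F] y := by rw [TensorProduct.sum_tmul]
        _ = k ⊗ₜ[F] y := by rw [Module.Basis.sum_repr]
  | add y z hy hz =>
      simp only [map_add]
      conv_rhs => rw [← hy, ← hz]
      rw [← Finset.sum_add_distrib]
      exact Finset.sum_congr rfl fun i _ => TensorProduct.tmul_add _ _ _

lemma coord_basis_sum (bK : Module.Basis (Fin n) F K) (i : Fin n) (v : Fin n → A) :
    (∑ j, TensorProduct.lid F A
      ((LinearMap.rTensor A (bK.coord i)) (bK j ⊗ₜ[F] v j))) = v i := by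
  have h1 : ∀ j, (TensorProduct.lid F A) ((LinearMap.rTensor A (bK.coord i)) (bK j ⊗ₜ[F] v j))
      = (if j = i then (1:F) else 0) • v j := by
    intro j
    rw [LinearMap.rTensor_tmul, TensorProduct.lid_tmul, Module.Basis.coord_apply, Module.Basis.repr_self,
      Finsupp.single_apply]
  rw [Finset.sum_congr rfl fun j _ => h1 j]
  simp

def piEquiv (bK : Module.Basis (Fin n) F K) (t : A) :
    (Fin n → MD (RingHom.id A) t) ≃ₗ[Polynomial A]
      MD ((Algebra.TensorProduct.includeRight : A →ₐ[F] K ⊗[F] A).toRingHom)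
        ((1 : K) ⊗ₜ[F] t) := by
  set ι : A →+* K ⊗[F] A :=
    (Algebra.TensorProduct.includeRight : A →ₐ[F] K ⊗[F] A).toRingHom with hι
  set T : K ⊗[F] A := (1 : K) ⊗ₜ[F] t with hT
  set um : MD (RingHom.id A) t → A := MD.unmk (RingHom.id A) t with hum
  set ℓ : (Fin n → MD (RingHom.id A) t) → MD ι T := fun v =>
    MD.mk ι T (∑ i, bK i ⊗ₜ[F] um (v i)) with hℓ
  set g : MD ι T → (Fin n → MD (RingHom.id A) t) := fun x i =>
    MD.mk (RingHom.id A) t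
      (TensorProduct.lid F A ((LinearMap.rTensor A (bK.coord i)) (MD.unmk ι T x))) with hg
  have hadd : ∀ v w, ℓ (v + w) = ℓ v + ℓ w := by
    intro v w
    simp only [hℓ, hum, MD.mk, MD.unmk, Pi.add_apply]
    show (∑ i, bK i ⊗ₜ[F] (MD.unmk (RingHom.id A) t (v i) + MD.unmk (RingHom.id A) t (w i)))
      = (∑ i, bK i ⊗ₜ[F] MD.unmk (RingHom.id A) t (v i))
        + ∑ i, bK i ⊗ₜ[F] MD.unmk (RingHom.id A) t (w i)
    rw [← Finset.sum_add_distrib]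
    exact Finset.sum_congr rfl fun i _ => TensorProduct.tmul_add _ _ _
  have hgl : ∀ v, g (ℓ v) = v := by
    intro v
    funext i
    simp only [hℓ, hg, hum, MD.unmk_mk]
    show MD.mk (RingHom.id A) t
      (TensorProduct.lid F A ((LinearMap.rTensor A (bK.coord i))
        (∑ j, bK j ⊗ₜ[F] MD.unmk (RingHom.id A) t (v j)))) = v i
    rw [map_sum, map_sum, coord_basis_sum bK i (fun j => MD.unmk (RingHom.id A) t (v j))]
    exact MD.mk_unmk _ _ _
  have hlg : ∀ x, ℓ (g x) = x := by
    intro x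
    simp only [hℓ, hg, hum, MD.unmk_mk]
    show MD.mk ι T (∑ i, bK i ⊗ₜ[F]
      TensorProduct.lid F A ((LinearMap.rTensor A (bK.coord i)) (MD.unmk ι T x))) = x
    rw [tensor_decomp bK (MD.unmk ι T x)]
    exact MD.mk_unmk _ _ _
  have hsmul : ∀ (p : Polynomial A) (v : Fin n → MD (RingHom.id A) t), ℓ (p • v) = p • ℓ v := by
    refine MD.linear_of_CX (AddMonoidHom.mk' ℓ hadd) ?_ ?_
    · intro c v
      show ℓ ((C c : Polynomial A) • v) = (C c : Polynomial A) • ℓ v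
      rw [MD.C_smul]
      simp only [hℓ, hum, MD.unmk_mk]
      show MD.mk ι T (∑ i, bK i ⊗ₜ[F] MD.unmk (RingHom.id A) t (((C c : Polynomial A) • v) i))
        = MD.mk ι T (ι c * ∑ i, bK i ⊗ₜ[F] MD.unmk (RingHom.id A) t (v i))
      congr 1
      rw [Finset.mul_sum]
      refine Finset.sum_congr rfl fun i _ => ?_
      have h2 : ((C c : Polynomial A) • v) i = (C c : Polynomial A) • (v i) := rfl
      rw [h2, MD.C_smul]
      show bK i ⊗ₜ[F] (c * MD.unmk (RingHom.id A) t (v i))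
        = ((1 : K) ⊗ₜ[F] c) * (bK i ⊗ₜ[F] MD.unmk (RingHom.id A) t (v i))
      rw [Algebra.TensorProduct.tmul_mul_tmul, one_mul]
    · intro v
      show ℓ ((X : Polynomial A) • v) = (X : Polynomial A) • ℓ v
      rw [MD.X_smul]
      simp only [hℓ, hum, MD.unmk_mk]
      show MD.mk ι T (∑ i, bK i ⊗ₜ[F] MD.unmk (RingHom.id A) t (((X : Polynomial A) • v) i))
        = MD.mk ι T ((∑ i, bK i ⊗ₜ[F] MD.unmk (RingHom.id A) t (v i)) * T)
      congr 1
      rw [Finset.sum_mul]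
      refine Finset.sum_congr rfl fun i _ => ?_
      have h2 : ((X : Polynomial A) • v) i = (X : Polynomial A) • (v i) := rfl
      rw [h2, MD.X_smul]
      show bK i ⊗ₜ[F] (MD.unmk (RingHom.id A) t (v i) * t)
        = (bK i ⊗ₜ[F] MD.unmk (RingHom.id A) t (v i)) * ((1 : K) ⊗ₜ[F] t)
      rw [Algebra.TensorProduct.tmul_mul_tmul, mul_one]
  exact
    { toFun := ℓ
      map_add' := hadd
      map_smul' := fun p v => hsmul p v
      invFun := g
      left_inv := hgl
      right_inv := hlg }

end PiEq

set_option maxHeartbeats 1000000 in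
set_option synthInstance.maxHeartbeats 100000 in
open TensorProduct in
/-- Let `A` be a finite-dimensional algebra over the finite field `F`, and let
`a, b ∈ A^×` be units that are conjugate by a unit of `A ⊗_F F̄`. Then `a` and `b`
are conjugate by a unit of `A` itself. -/
theorem stmt_2 (F : Type*) [Field F] [Finite F]
    (A : Type*) [Ring A] [Algebra F A] [FiniteDimensional F A]
    (a b : Aˣ)
    (h : ∃ u : (AlgebraicClosure F ⊗[F] A)ˣ,
      (Algebra.TensorProduct.includeRight (R := F) (A := AlgebraicClosure F) (a : A)) =
        (u : AlgebraicClosure F ⊗[F] A) *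
          Algebra.TensorProduct.includeRight (b : A) *
          ((u⁻¹ : (AlgebraicClosure F ⊗[F] A)ˣ) : AlgebraicClosure F ⊗[F] A)) :
    ∃ v : Aˣ, (a : A) = (v : A) * (b : A) * ((v⁻¹ : Aˣ) : A) := by
  classical
  obtain ⟨u, hu⟩ := h
  set Ω := AlgebraicClosure F
  -- rewrite the conjugation hypothesis
  have ha : (Algebra.TensorProduct.includeRight (R := F) (A := Ω) (a : A)) * (u : Ω ⊗[F] A)
      = (u : Ω ⊗[F] A) * Algebra.TensorProduct.includeRight (b : A) := by
    rw [hu, mul_assoc, mul_assoc, Units.inv_mul, mul_one]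
  -- descend `u` to a finite subextension
  obtain ⟨S₁, hS₁⟩ := TensorProduct.exists_finset ((u : Ω ⊗[F] A))
  obtain ⟨S₂, hS₂⟩ := TensorProduct.exists_finset (((u⁻¹ : (Ω ⊗[F] A)ˣ) : Ω ⊗[F] A))
  set Sf : Finset Ω := S₁.image Prod.fst ∪ S₂.image Prod.fst with hSf
  set K : IntermediateField F Ω := IntermediateField.adjoin F (Sf : Set Ω) with hK
  have hKfd : FiniteDimensional F K := by
    apply IntermediateField.finiteDimensional_adjoin
    intro x _
    exact (Algebra.IsAlgebraic.isAlgebraic (R := F) (A := Ω) x).isIntegral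
  set j : K ⊗[F] A →ₐ[F] Ω ⊗[F] A :=
    Algebra.TensorProduct.map K.val (AlgHom.id F A) with hj
  have hjinj : Function.Injective j := by
    have hj2 : j.toLinearMap = LinearMap.rTensor A K.val.toLinearMap := by
      apply TensorProduct.ext'
      intro k x
      simp [hj, LinearMap.rTensor_tmul]
    have : Function.Injective j.toLinearMap := by
      rw [hj2]
      exact Module.Flat.rTensor_preserves_injective_linearMap K.val.toLinearMap
        (RingHom.injective (K.val : K →+* Ω))
    exact this
  have hmem1 : ∀ p ∈ S₁, p.1 ∈ K := by
    intro p hp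
    apply IntermediateField.subset_adjoin
    exact Finset.mem_union_left _ (Finset.mem_image.2 ⟨p, hp, rfl⟩)
  have hmem2 : ∀ p ∈ S₂, p.1 ∈ K := by
    intro p hp
    apply IntermediateField.subset_adjoin
    exact Finset.mem_union_right _ (Finset.mem_image.2 ⟨p, hp, rfl⟩)
  set u1 : K ⊗[F] A := ∑ p ∈ S₁.attach, (⟨p.1.1, hmem1 p.1 p.2⟩ : K) ⊗ₜ[F] p.1.2 with hu1
  set u2 : K ⊗[F] A := ∑ p ∈ S₂.attach, (⟨p.1.1, hmem2 p.1 p.2⟩ : K) ⊗ₜ[F] p.1.2 with hu2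
  have hjt1 : ∀ p : {x // x ∈ S₁}, j ((⟨p.1.1, hmem1 p.1 p.2⟩ : K) ⊗ₜ[F] p.1.2)
      = p.1.1 ⊗ₜ[F] p.1.2 := by
    intro p
    simp [hj]
  have hjt2 : ∀ p : {x // x ∈ S₂}, j ((⟨p.1.1, hmem2 p.1 p.2⟩ : K) ⊗ₜ[F] p.1.2)
      = p.1.1 ⊗ₜ[F] p.1.2 := by
    intro p
    simp [hj]
  have hju1 : j u1 = (u : Ω ⊗[F] A) := by
    rw [hu1, map_sum, Finset.sum_congr rfl (fun p _ => hjt1 p), hS₁,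
      ← Finset.sum_attach S₁ (fun p => p.1 ⊗ₜ[F] p.2)]
  have hju2 : j u2 = ((u⁻¹ : (Ω ⊗[F] A)ˣ) : Ω ⊗[F] A) := by
    rw [hu2, map_sum, Finset.sum_congr rfl (fun p _ => hjt2 p), hS₂,
      ← Finset.sum_attach S₂ (fun p => p.1 ⊗ₜ[F] p.2)]
  have h12 : u1 * u2 = 1 := by
    apply hjinj
    rw [map_mul, hju1, hju2, Units.mul_inv]; exact j.map_one.symm
  have h21 : u2 * u1 = 1 := by
    apply hjinj
    rw [map_mul, hju1, hju2, Units.inv_mul]; exact j.map_one.symm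
  set uK : (K ⊗[F] A)ˣ := ⟨u1, u2, h12, h21⟩ with huK
  have hjincl : ∀ x : A, j ((1 : K) ⊗ₜ[F] x) = (1 : Ω) ⊗ₜ[F] x := by
    intro x
    simp [hj]
  have hrel : ((1 : K) ⊗ₜ[F] (a : A)) * u1 = u1 * ((1 : K) ⊗ₜ[F] (b : A)) := by
    apply hjinj
    rw [map_mul, map_mul, hju1, hjincl, hjincl]
    simpa [Algebra.TensorProduct.includeRight_apply] using ha
  -- build the module equivalences
  have hAfin : Finite A := Module.finite_of_finite F
  set n : ℕ := Module.finrank F K with hn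
  have hnpos : 0 < n := Module.finrank_pos
  haveI : Nonempty (Fin n) := Fin.pos_iff_nonempty.1 hnpos
  set bK : Module.Basis (Fin n) F K := Module.finBasis F K with hbK
  set e2 : MD ((Algebra.TensorProduct.includeRight : A →ₐ[F] K ⊗[F] A).toRingHom)
        ((1 : K) ⊗ₜ[F] (a : A)) ≃ₗ[Polynomial A]
      MD ((Algebra.TensorProduct.includeRight : A →ₐ[F] K ⊗[F] A).toRingHom)
        ((1 : K) ⊗ₜ[F] (b : A)) :=
    unitEquiv _ _ _ uK hrel with he2
  set E : (Fin n → MD (RingHom.id A) (a : A)) ≃ₗ[Polynomial A]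
      (Fin n → MD (RingHom.id A) (b : A)) :=
    ((piEquiv bK (a : A)).trans e2).trans (piEquiv bK (b : A)).symm with hE
  obtain ⟨e⟩ := pow_cancel E
  exact exists_unit_of_equiv (a : A) (b : A) e
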